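/- Let q₀, q₁, q₂, q₃ be real polynomials with q₀(0) = 0, q₀'(0) = 1, q₁(0) = 0, satisfying q₂ q₀ = 3 q₁² − q₀' + 1 and q₃ q₀² = q₁³ − q₁' q₀ + q₁. Then q₀(x) = x + A x³ for some constant A ≥ 0. -/

import Mathlib

open Polynomial

/-- If a real polynomial has derivative `C c` and vanishes at `0`, it is `C c * X`. -/
lemma aux_lin (s : Polynomial ℝ) (c : ℝ) (h0 : s.eval 0 = 0)
    (hd : derivative s = C c) : s = C c * X := by
  have hder : derivative (s - C c * X) = 0 := by
    simp [derivative_sub, hd]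
  have h2 := Polynomial.eq_C_of_derivative_eq_zero hder
  have he : (s - C c * X).eval 0 = 0 := by simp [h0]
  rw [h2] at he
  simp at he
  simp [he] at h2
  exact sub_eq_zero.mp h2

/-- Degree comparison for the key differential relation. -/
lemma aux_deg (s u : Polynomial ℝ) (ha : 1 ≤ s.natDegree) (hk : 1 ≤ u.natDegree)
    (hs : s ≠ 0) (hu : u ≠ 0)
    (hE : 2 * derivative s * u = s * derivative u + 2) :
    u.natDegree = 2 * s.natDegree := by
  set a := s.natDegree with hadef
  set k := u.natDegree with hkdef
  have hlcs : s.coeff a ≠ 0 := by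
    rw [hadef, coeff_natDegree]; exact leadingCoeff_ne_zero.mpr hs
  have hlcu : u.coeff k ≠ 0 := by
    rw [hkdef, coeff_natDegree]; exact leadingCoeff_ne_zero.mpr hu
  have hC2 : (C (2:ℝ) : Polynomial ℝ) = 2 := map_ofNat C 2
  have h2s : (2 * derivative s).natDegree ≤ a - 1 := by
    refine natDegree_mul_le.trans ?_
    have h1 := natDegree_derivative_le s
    have h2 : (2 : Polynomial ℝ).natDegree = 0 := by
      rw [← hC2]; exact natDegree_C 2
    omega
  have hcoeff : (2 * derivative s * u).coeff ((a - 1) + k)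
      = (s * derivative u + 2).coeff ((a - 1) + k) := by rw [hE]
  rw [coeff_mul_add_eq_of_natDegree_le h2s le_rfl, coeff_add,
    show (a - 1) + k = a + (k - 1) by omega,
    coeff_mul_add_eq_of_natDegree_le le_rfl (natDegree_derivative_le u)] at hcoeff
  rw [← hC2] at hcoeff
  rw [coeff_C, if_neg (show a + (k-1) ≠ 0 by omega), coeff_C_mul,
    coeff_derivative, coeff_derivative,
    show (a-1)+1 = a by omega, show (k-1)+1 = k by omega] at hcoeff
  have hca : ((a - 1 : ℕ) : ℝ) + 1 = (a : ℝ) := by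
    rw [Nat.cast_sub ha]; ring
  have hck : ((k - 1 : ℕ) : ℝ) + 1 = (k : ℝ) := by
    rw [Nat.cast_sub hk]; ring
  rw [hca, hck, add_zero] at hcoeff
  have hzero : s.coeff a * u.coeff k * (2 * (a : ℝ) - k) = 0 := by
    linear_combination hcoeff
  have hne := mul_ne_zero hlcs hlcu
  have h5 : (k : ℝ) = 2 * a := by
    rcases mul_eq_zero.mp hzero with h | h
    · exact absurd h hne
    · linarith
  exact_mod_cast h5

theorem abel_q0_form
    (q₀ q₁ q₂ q₃ : Polynomial ℝ)
    (h00 : q₀.eval 0 = 0) (h01 : (derivative q₀).eval 0 = 1)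
    (h10 : q₁.eval 0 = 0)
    (hrel1 : q₂ * q₀ = 3 * q₁ ^ 2 - derivative q₀ + 1)
    (hrel2 : q₃ * q₀ ^ 2 = q₁ ^ 3 - derivative q₁ * q₀ + q₁) :
    ∃ A : ℝ, 0 ≤ A ∧ q₀ = X + C A * X ^ 3 := by
  have hq0ne : q₀ ≠ 0 := by
    intro h
    rw [h] at hrel1
    have := congrArg (eval 0) hrel1
    simp [h10] at this
  have hdvd : q₀ ∣ q₁ * (q₁ ^ 2 + 1) := ⟨q₃ * q₀ + derivative q₁, by linear_combination -hrel2⟩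
  obtain ⟨s, t, hs, ht, hst⟩ := exists_dvd_and_dvd_of_dvd_mul hdvd
  have hsne : s ≠ 0 := by rintro rfl; simp at hst; exact hq0ne hst
  have htne : t ≠ 0 := by rintro rfl; simp at hst; exact hq0ne hst
  have hcop : IsCoprime s t := by
    have h1 : IsCoprime q₁ (q₁ ^ 2 + 1) := ⟨-q₁, 1, by ring⟩
    exact (h1.of_isCoprime_of_dvd_left hs).of_isCoprime_of_dvd_right ht
  obtain ⟨w, hw⟩ := ht
  have ht0 : t.eval 0 ≠ 0 := by
    intro h0
    have := congrArg (eval 0) hw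
    simp [h10, h0] at this
  have hs0 : s.eval 0 = 0 := by
    rw [hst] at h00
    simp only [eval_mul] at h00
    rcases mul_eq_zero.mp h00 with h | h
    · exact h
    · exact absurd h ht0
  have ha1 : 1 ≤ s.natDegree := by
    rcases Nat.eq_zero_or_pos s.natDegree with h | h
    · exfalso
      have hC := Polynomial.eq_C_of_natDegree_eq_zero h
      rw [hC] at hs0
      simp at hs0
      rw [hC, hs0] at hsne
      simp at hsne
    · exact h
  have hd1 : 3 * q₁ ^ 2 + 1 - derivative q₀ = q₀ * q₂ := by linear_combination -hrel1
  have hsq0 : s ∣ q₀ := hst ▸ dvd_mul_right s t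
  have htq0 : t ∣ q₀ := hst ▸ dvd_mul_left t s
  have hq0' : derivative q₀ = derivative s * t + s * derivative t := by
    rw [hst, derivative_mul]
  have hsd : s ∣ 1 - derivative s * t := by
    obtain ⟨p, hp⟩ := hs
    have h1 : s ∣ 3 * q₁ ^ 2 + 1 - derivative q₀ := hsq0.trans ⟨q₂, hd1⟩
    have h2 : s ∣ 3 * q₁ ^ 2 := ⟨3 * s * p ^ 2, by rw [hp]; ring⟩
    have heq : 1 - derivative s * t
        = (3 * q₁ ^ 2 + 1 - derivative q₀) - 3 * q₁ ^ 2 + s * derivative t := by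
      rw [hq0']; ring
    rw [heq]
    exact dvd_add (dvd_sub h1 h2) (dvd_mul_right s _)
  have htd : t ∣ s * derivative t + 2 := by
    have h1 : t ∣ 3 * q₁ ^ 2 + 1 - derivative q₀ := htq0.trans ⟨q₂, hd1⟩
    have h2 : t ∣ 3 * (q₁ ^ 2 + 1) := ⟨3 * w, by rw [hw]; ring⟩
    have heq : s * derivative t + 2
        = 3 * (q₁ ^ 2 + 1) - (3 * q₁ ^ 2 + 1 - derivative q₀) - derivative s * t := by
      rw [hq0']; ring
    rw [heq]
    exact dvd_sub (dvd_sub h2 h1) (Dvd.intro_left _ rfl)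
  by_cases hb0 : t.natDegree = 0
  · -- t is a nonzero constant; q₀ = X
    have htC := Polynomial.eq_C_of_natDegree_eq_zero hb0
    set c := t.coeff 0 with hcd
    have hc : c ≠ 0 := by
      intro h; rw [htC, h] at ht0; simp at ht0
    rw [htC] at hsd
    have hz : 1 - derivative s * C c = 0 := by
      by_contra hne
      have hle := Polynomial.natDegree_le_of_dvd hsd hne
      have hb : (1 - derivative s * C c).natDegree ≤ s.natDegree - 1 := by
        refine (natDegree_sub_le _ _).trans ?_
        have h1 : (derivative s * C c).natDegree ≤ s.natDegree - 1 := by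
          refine natDegree_mul_le.trans ?_
          have := natDegree_derivative_le s
          simp [natDegree_C]
        simp [natDegree_one]
        omega
      omega
    have h1eq : derivative s * C c = 1 := by linear_combination -hz
    have hds : derivative s = C c⁻¹ := by
      calc derivative s = derivative s * (C c * C c⁻¹) := by
            rw [← C_mul, mul_inv_cancel₀ hc, C_1, mul_one]
        _ = (derivative s * C c) * C c⁻¹ := by ring
        _ = C c⁻¹ := by rw [h1eq, one_mul]
    have hsX := aux_lin s c⁻¹ hs0 hds
    refine ⟨0, le_rfl, ?_⟩
    rw [hst, hsX, htC, map_zero, zero_mul, add_zero,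
      mul_right_comm, ← C_mul, inv_mul_cancel₀ hc, C_1, one_mul]
  · -- main case
    have hb1 : 1 ≤ t.natDegree := Nat.one_le_iff_ne_zero.mpr hb0
    have hC2 : (C (2:ℝ) : Polynomial ℝ) = 2 := map_ofNat C 2
    have hn2 : (2 : Polynomial ℝ).natDegree = 0 := by rw [← hC2]; exact natDegree_C 2
    have hsG : s ∣ 2 * derivative s * t - s * derivative t - 2 := by
      have heq : 2 * derivative s * t - s * derivative t - 2
          = (-2) * (1 - derivative s * t) - s * derivative t := by ring
      rw [heq]
      exact dvd_sub (hsd.mul_left _) (dvd_mul_right s _)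
    have htG : t ∣ 2 * derivative s * t - s * derivative t - 2 := by
      have heq : 2 * derivative s * t - s * derivative t - 2
          = 2 * derivative s * t - (s * derivative t + 2) := by ring
      rw [heq]
      exact dvd_sub (Dvd.intro_left _ rfl) htd
    have hG0 : 2 * derivative s * t - s * derivative t - 2 = 0 := by
      by_contra hne
      have hdl := Polynomial.natDegree_le_of_dvd (hcop.mul_dvd hsG htG) hne
      rw [natDegree_mul hsne htne] at hdl
      have hds' := natDegree_derivative_le s
      have hdt' := natDegree_derivative_le t
      have h1 : (2 * derivative s * t).natDegree ≤ (s.natDegree - 1) + t.natDegree := by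
        refine natDegree_mul_le.trans ?_
        have h2 : (2 * derivative s).natDegree ≤ s.natDegree - 1 := by
          refine natDegree_mul_le.trans ?_
          omega
        omega
      have h3 : (s * derivative t).natDegree ≤ s.natDegree + (t.natDegree - 1) :=
        natDegree_mul_le.trans (by omega)
      have h4 : (2 * derivative s * t - s * derivative t - 2).natDegree
          < s.natDegree + t.natDegree := by
        refine lt_of_le_of_lt (natDegree_sub_le _ _) ?_
        refine max_lt (lt_of_le_of_lt (natDegree_sub_le _ _) ?_) (by omega)
        exact max_lt (by omega) (by omega)
      omega
    have hE : 2 * derivative s * t = s * derivative t + 2 := by linear_combination hG0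
    have hb2a : t.natDegree = 2 * s.natDegree := aux_deg s t ha1 hb1 hsne htne hE
    have hlcs : s.coeff s.natDegree ≠ 0 := by
      rw [coeff_natDegree]; exact leadingCoeff_ne_zero.mpr hsne
    set a := s.natDegree with hadef
    set c := t.coeff t.natDegree / (s.coeff a) ^ 2 with hcdef
    set r := t - C c * s ^ 2 with hrdef
    have hEr : 2 * derivative s * r = s * derivative r + 2 := by
      have hdr : derivative r = derivative t - C c * (2 * s * derivative s) := by
        rw [hrdef, derivative_sub, derivative_mul, derivative_C, derivative_pow]
        push_cast
        simp only [hC2]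
        ring
      rw [hdr, hrdef]
      linear_combination hE
    have hrne : r ≠ 0 := by
      intro h0
      rw [h0, mul_zero, derivative_zero, mul_zero, zero_add] at hEr
      have := congrArg (eval 0) hEr
      norm_num at this
    have hrle : r.natDegree ≤ t.natDegree := by
      rw [hrdef]
      refine (natDegree_sub_le _ _).trans ?_
      refine max_le le_rfl ?_
      refine natDegree_mul_le.trans ?_
      rw [natDegree_C, natDegree_pow]
      omega
    have hrcoeff : r.coeff t.natDegree = 0 := by
      rw [hrdef, coeff_sub, coeff_C_mul]
      have h7 : (s ^ 2).coeff t.natDegree = (s.coeff a) ^ 2 := by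
        rw [hb2a]
        exact coeff_pow_of_natDegree_le le_rfl
      rw [h7, hcdef]
      field_simp; simp
    have hrlt : r.natDegree < t.natDegree := by
      rcases lt_or_eq_of_le hrle with h | h
      · exact h
      · exfalso
        apply hrne
        apply Polynomial.leadingCoeff_eq_zero.mp
        rw [← Polynomial.coeff_natDegree, h]
        exact hrcoeff
    by_cases hk0 : r.natDegree = 0
    · -- r is a constant c₀ ≠ 0
      have hrC := Polynomial.eq_C_of_natDegree_eq_zero hk0
      set c₀ := r.coeff 0 with hc0def
      have hc₀ : c₀ ≠ 0 := by
        intro h; rw [hrC, h, map_zero] at hrne; exact hrne rfl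
      rw [hrC] at hEr
      rw [derivative_C, mul_zero, zero_add] at hEr
      have hds : derivative s = C c₀⁻¹ := by
        have h8 : C (2 * c₀) * derivative s = C (2 * c₀) * C c₀⁻¹ := by
          calc C (2 * c₀) * derivative s = 2 * derivative s * C c₀ := by
                rw [C_mul, hC2]; ring
            _ = 2 := hEr
            _ = C (2 * c₀) * C c₀⁻¹ := by
                rw [← C_mul, ← hC2]
                congr 1
                field_simp
        exact mul_left_cancel₀ (by simp [hc₀] : (C (2 * c₀) : Polynomial ℝ) ≠ 0) h8
      have hsX := aux_lin s c₀⁻¹ hs0 hds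
      have ht_eq : t = C c * s ^ 2 + C c₀ := by
        rw [← hrC, hrdef]; ring
      refine ⟨c * (c₀⁻¹) ^ 3, ?_, ?_⟩
      · -- nonnegativity
        by_contra hA
        push_neg at hA
        set A := c * (c₀⁻¹) ^ 3 with hAdef
        have hAne : A ≠ 0 := ne_of_lt hA
        have hx2 : (Real.sqrt (-A⁻¹)) ^ 2 = -A⁻¹ := by
          rw [Real.sq_sqrt]
          have : A⁻¹ < 0 := inv_lt_zero.mpr hA
          linarith
        set x₀ := Real.sqrt (-A⁻¹) with hx₀
        have htx : t.eval x₀ = 0 := by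
          rw [ht_eq, hsX]
          simp only [eval_add, eval_mul, eval_pow, eval_C, eval_X]
          have hxx : c * (c₀⁻¹ * x₀) ^ 2 + c₀ = c₀ * (A * x₀ ^ 2 + 1) := by
            rw [hAdef]; field_simp
          rw [hxx, hx2]
          have : A * -A⁻¹ + 1 = 0 := by field_simp; norm_num
          rw [this, mul_zero]
        have := congrArg (eval x₀) hw
        simp only [eval_add, eval_mul, eval_pow, eval_one, htx, zero_mul] at this
        nlinarith [sq_nonneg (q₁.eval x₀)]
      · rw [hst, hsX, ht_eq, hsX]
        rw [show C c₀⁻¹ * X * (C c * (C c₀⁻¹ * X) ^ 2 + C c₀)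
            = C (c₀⁻¹ * (c * c₀⁻¹ ^ 2)) * X ^ 3 + C (c₀⁻¹ * c₀) * X from by
          rw [C_mul, C_mul, C_mul, C_pow]; ring]
        rw [inv_mul_cancel₀ hc₀, C_1, one_mul,
          show c₀⁻¹ * (c * c₀⁻¹ ^ 2) = c * c₀⁻¹ ^ 3 from by ring]
        ring
    · have hk1 : 1 ≤ r.natDegree := Nat.one_le_iff_ne_zero.mpr hk0
      have := aux_deg s r ha1 hk1 hsne hrne hEr
      omega
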